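/- ∫₀¹ log(1−x)/(1+x) dx = (log(2)² − π²/6)/2. -/

import Mathlib

open MeasureTheory Real Set intervalIntegral

lemma ilog : IntervalIntegrable Real.log volume 0 1 := by
  have hrpow : IntervalIntegrable (fun x : ℝ => 2 * x ^ (-(1/2) : ℝ)) volume 0 1 :=
    (intervalIntegrable_rpow' (by norm_num)).const_mul 2
  refine hrpow.mono_fun Real.measurable_log.aestronglyMeasurable ?_
  rw [Filter.EventuallyLE, ae_restrict_iff' measurableSet_uIoc]
  refine Filter.Eventually.of_forall fun x hx => ?_
  rw [uIoc_of_le (by norm_num)] at hx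
  obtain ⟨hx0, hx1⟩ := hx
  have h1 : -Real.log x = 2 * Real.log (x ^ (-(1/2) : ℝ)) := by
    rw [Real.log_rpow hx0]; ring
  have h2 : Real.log (x ^ (-(1/2) : ℝ)) ≤ x ^ (-(1/2) : ℝ) - 1 :=
    Real.log_le_sub_one_of_pos (Real.rpow_pos_of_pos hx0 _)
  have h3 : Real.log x ≤ 0 := Real.log_nonpos hx0.le hx1
  have h4 : (0:ℝ) < x ^ (-(1/2) : ℝ) := Real.rpow_pos_of_pos hx0 _
  simp only [Real.norm_eq_abs, abs_of_nonpos h3, abs_of_pos (by positivity : (0:ℝ) < 2 * x ^ (-(1/2):ℝ))]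
  nlinarith

lemma ipowlog (n : ℕ) : IntervalIntegrable (fun t : ℝ => t ^ n * Real.log t) volume 0 1 := by
  refine ilog.mono_fun ?_ ?_
  · exact ((measurable_id.pow_const n).mul Real.measurable_log).aestronglyMeasurable
  · rw [Filter.EventuallyLE, ae_restrict_iff' measurableSet_uIoc]
    refine Filter.Eventually.of_forall fun x hx => ?_
    rw [uIoc_of_le (by norm_num)] at hx
    simp only [Real.norm_eq_abs, abs_mul]
    have h1 : |x ^ n| ≤ 1 := by
      rw [abs_pow]
      exact pow_le_one₀ (abs_nonneg x) (by rw [abs_of_pos hx.1]; exact hx.2)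
    nlinarith [abs_nonneg (Real.log x), abs_nonneg (x ^ n)]

lemma int_pow_log (n : ℕ) :
    ∫ t in (0:ℝ)..1, t ^ n * Real.log t = -(1 / ((n:ℝ) + 1) ^ 2) := by
  have hn1 : ((n:ℝ) + 1) ≠ 0 := by positivity
  set F : ℝ → ℝ := fun t => (t ^ (n+1) * (((n:ℝ)+1) * Real.log t - 1)) / ((n:ℝ)+1)^2 with hF
  have hF0 : F 0 = 0 := by simp [hF]
  have hcont : ContinuousOn F (Icc 0 1) := by
    intro x hx
    rcases eq_or_ne x 0 with rfl | hx0
    · have key : Filter.Tendsto F (nhdsWithin 0 (Ioi 0)) (nhds 0) := by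
        have ht : Filter.Tendsto (fun t : ℝ => Real.log t * t ^ ((n:ℝ)+1))
            (nhdsWithin 0 (Ioi 0)) (nhds 0) :=
          tendsto_log_mul_rpow_nhdsGT_zero (by positivity)
        have h2 : Filter.Tendsto (fun t : ℝ => t ^ ((n:ℝ)+1)) (nhdsWithin 0 (Ioi 0)) (nhds 0) := by
          have := (Real.continuousAt_rpow_const 0 ((n:ℝ)+1) (Or.inr (by positivity))).tendsto
          rw [Real.zero_rpow hn1] at this
          exact this.mono_left nhdsWithin_le_nhds
        have heq : F =ᶠ[nhdsWithin (0:ℝ) (Ioi 0)]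
            fun t => ((Real.log t * t ^ ((n:ℝ)+1)) * ((n:ℝ)+1) - t ^ ((n:ℝ)+1)) / ((n:ℝ)+1)^2 := by
          filter_upwards [self_mem_nhdsWithin] with t (ht' : t ∈ Ioi 0)
          have hrp : (t:ℝ) ^ ((n:ℝ)+1) = t ^ (n+1) := by
            rw [← Real.rpow_natCast t (n+1)]; push_cast; ring_nf
          rw [hF]; simp only [hrp]; ring
        rw [Filter.tendsto_congr' heq]
        simpa using ((ht.mul_const (((n:ℝ)+1))).sub h2).div_const (((n:ℝ)+1)^2)
      have : ContinuousWithinAt F (Ioi 0) 0 := by rw [ContinuousWithinAt, hF0]; exact key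
      exact (continuousWithinAt_Ioi_iff_Ici.mp this).mono Icc_subset_Ici_self
    · have hx0' : 0 < x := lt_of_le_of_ne hx.1 (Ne.symm hx0)
      apply ContinuousAt.continuousWithinAt
      have : ContinuousAt Real.log x := Real.continuousAt_log hx0'.ne'
      fun_prop (disch := exact hx0.symm)
  have hderiv : ∀ x ∈ Ioo (0:ℝ) 1, HasDerivAt F (x ^ n * Real.log x) x := by
    intro x hx
    have hx0 : (0:ℝ) < x := hx.1
    have h1 : HasDerivAt (fun t : ℝ => t ^ (n+1)) (((n:ℝ)+1) * x ^ n) x := by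
      simpa using (hasDerivAt_pow (n+1) x)
    have h2 : HasDerivAt (fun t : ℝ => ((n:ℝ)+1) * Real.log t - 1) (((n:ℝ)+1) / x) x := by
      simpa [div_eq_mul_inv] using ((Real.hasDerivAt_log hx0.ne').const_mul ((n:ℝ)+1)).sub_const 1
    have := (h1.mul h2).div_const (((n:ℝ)+1)^2)
    refine this.congr_deriv ?_
    field_simp
    ring
  rw [intervalIntegral.integral_eq_sub_of_hasDeriv_right_of_le (by norm_num) hcont
    (fun x hx => (hderiv x hx).hasDerivWithinAt) ((ipowlog n))]
  rw [hF0]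
  simp only [hF, Real.log_one, one_pow]
  field_simp
  ring

lemma hasSum_inv_sq_succ : HasSum (fun n : ℕ => 1 / ((n:ℝ)+1)^2) (π^2/6) := by
  have h := hasSum_zeta_two
  have h2 := ((hasSum_nat_add_iff (f := fun n : ℕ => (1:ℝ) / (n:ℝ)^2) 1).mpr :
    HasSum _ (π^2/6 + ∑ i ∈ Finset.range 1, (1:ℝ)/(i:ℝ)^2) → _) (by simpa using h)
  simpa using h2

lemma alt_sum : HasSum (fun n : ℕ => (-1:ℝ)^n / ((n:ℝ)+1)^2) (π^2/12) := by
  have hu := hasSum_inv_sq_succ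
  -- odd part: w n = 2/((n+1)^2) if n odd else 0
  set w : ℕ → ℝ := fun n => if Odd n then 2 / ((n:ℝ)+1)^2 else 0 with hw
  have hwsum : HasSum w (π^2/12) := by
    have hinj : Function.Injective (fun k : ℕ => 2*k+1) := fun a b h => by simpa using h
    rw [← Function.Injective.hasSum_iff hinj ?_]
    · have : (w ∘ fun k : ℕ => 2*k+1) = fun k : ℕ => (1/2) * (1 / ((k:ℝ)+1)^2) := by
        funext k
        simp only [hw, Function.comp_apply]
        rw [if_pos ⟨k, by omega⟩]
        push_cast
        field_simp
        ring
      rw [this]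
      convert hu.mul_left (1/2) using 1
      · rfl
      ring
    · intro n hn
      rw [hw]
      simp only []
      rw [if_neg]
      intro ⟨k, hk⟩
      exact hn ⟨k, by simp [hk]⟩
  have : (fun n : ℕ => (-1:ℝ)^n / ((n:ℝ)+1)^2) = fun n : ℕ => (1 / ((n:ℝ)+1)^2) - w n := by
    funext n
    rcases Nat.even_or_odd n with he | ho
    · rw [hw]; simp [he.neg_one_pow, Nat.not_odd_iff_even.mpr he]
    · rw [hw]; simp only [ho.neg_one_pow, if_pos ho]
      ring
  rw [this]
  have := hu.sub hwsum
  convert this using 1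
  · rfl
  ring

lemma int_log_div_one_add : ∫ t in (0:ℝ)..1, Real.log t / (1+t) = -(π^2/12) := by
  set F : ℕ → ℝ → ℝ := fun n t => (-1:ℝ)^n * (t^n * Real.log t) with hFdef
  have hioc : uIoc (0:ℝ) 1 = Ioc (0:ℝ) 1 := uIoc_of_le (by norm_num)
  have hFint : ∀ n, Integrable (F n) (volume.restrict (Ioc (0:ℝ) 1)) := by
    intro n
    have := ((ipowlog n).const_mul ((-1:ℝ)^n))
    rw [intervalIntegrable_iff, hioc] at this
    exact this
  have hnorm : ∀ n, (∫ t in Ioc (0:ℝ) 1, ‖F n t‖) = 1/((n:ℝ)+1)^2 := by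
    intro n
    have heq : ∀ t ∈ Ioc (0:ℝ) 1, ‖F n t‖ = -(t^n * Real.log t) := by
      intro t ht
      have h1 : Real.log t ≤ 0 := Real.log_nonpos ht.1.le ht.2
      have h2 : (0:ℝ) ≤ t^n := pow_nonneg ht.1.le n
      rw [hFdef]
      simp only [Real.norm_eq_abs, abs_mul, abs_pow, abs_neg, abs_one, one_pow, one_mul]
      rw [abs_of_pos ht.1, abs_of_nonpos h1]
      ring
    rw [setIntegral_congr_fun measurableSet_Ioc heq, MeasureTheory.integral_neg,
      ← intervalIntegral.integral_of_le (by norm_num : (0:ℝ) ≤ 1), int_pow_log]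
    ring
  have hsum : Summable fun n => ∫ t in Ioc (0:ℝ) 1, ‖F n t‖ := by
    rw [funext hnorm]
    exact hasSum_inv_sq_succ.summable
  have key := hasSum_integral_of_summable_integral_norm hFint hsum
  have hint : (∫ t in Ioc (0:ℝ) 1, ∑' n, F n t) = ∫ t in (0:ℝ)..1, Real.log t / (1+t) := by
    rw [intervalIntegral.integral_of_le (by norm_num : (0:ℝ) ≤ 1),
      integral_Ioc_eq_integral_Ioo, integral_Ioc_eq_integral_Ioo]
    refine setIntegral_congr_fun measurableSet_Ioo fun t ht => ?_
    have hnt : ‖(-t : ℝ)‖ < 1 := by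
      rw [norm_neg, Real.norm_eq_abs, abs_of_pos ht.1]; exact ht.2
    have h1 : (fun n : ℕ => F n t) = fun n : ℕ => (-t)^n * Real.log t := by
      funext n; rw [hFdef]; simp only []; rw [show (-t : ℝ) = (-1) * t by ring, mul_pow]; ring
    rw [h1, tsum_mul_right, tsum_geometric_of_norm_lt_one hnt]
    rw [sub_neg_eq_add]
    ring
  have hvals : (fun n => ∫ t in Ioc (0:ℝ) 1, F n t) =
      fun n : ℕ => -((-1:ℝ)^n / ((n:ℝ)+1)^2) := by
    funext n
    rw [hFdef]
    simp only []
    rw [MeasureTheory.integral_const_mul, ← intervalIntegral.integral_of_le (by norm_num : (0:ℝ) ≤ 1),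
      int_pow_log]
    ring
  rw [hvals, hint] at key
  exact HasSum.unique key alt_sum.neg

lemma int_const_div : ∫ t in (0:ℝ)..1, Real.log 2 / (1+t) = Real.log 2 * Real.log 2 := by
  have hderiv : ∀ t ∈ uIcc (0:ℝ) 1, HasDerivAt (fun t : ℝ => Real.log 2 * Real.log (1+t))
      (Real.log 2 / (1+t)) t := by
    intro t ht
    rw [uIcc_of_le (by norm_num)] at ht
    have h1t : (0:ℝ) < 1 + t := by linarith [ht.1]
    have := ((Real.hasDerivAt_log h1t.ne').comp t ((hasDerivAt_id t).const_add 1)).const_mul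
      (Real.log 2)
    simpa [div_eq_mul_inv, mul_comm] using this
  have hint : IntervalIntegrable (fun t : ℝ => Real.log 2 / (1+t)) volume 0 1 := by
    apply ContinuousOn.intervalIntegrable
    intro t ht
    rw [uIcc_of_le (by norm_num)] at ht
    have h1t : (0:ℝ) < 1 + t := by linarith [ht.1]
    exact (continuousAt_const.div ((continuous_const.add continuous_id).continuousAt)
      h1t.ne').continuousWithinAt
  rw [intervalIntegral.integral_eq_sub_of_hasDerivAt hderiv hint]
  norm_num

lemma int_log_one_add_div : ∫ t in (0:ℝ)..1, Real.log (1+t) / (1+t) = Real.log 2 ^ 2 / 2 := by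
  have hderiv : ∀ t ∈ uIcc (0:ℝ) 1, HasDerivAt (fun t : ℝ => Real.log (1+t) ^ 2 / 2)
      (Real.log (1+t) / (1+t)) t := by
    intro t ht
    rw [uIcc_of_le (by norm_num)] at ht
    have h1t : (0:ℝ) < 1 + t := by linarith [ht.1]
    have hl : HasDerivAt (fun t : ℝ => Real.log (1+t)) (1/(1+t)) t := by
      simpa [div_eq_mul_inv, Function.comp_def] using
        (Real.hasDerivAt_log h1t.ne').comp t ((hasDerivAt_id t).const_add 1)
    have := (hl.pow 2).div_const 2
    refine this.congr_deriv ?_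
    field_simp
    ring
  have hint : IntervalIntegrable (fun t : ℝ => Real.log (1+t) / (1+t)) volume 0 1 := by
    apply ContinuousOn.intervalIntegrable
    intro t ht
    rw [uIcc_of_le (by norm_num)] at ht
    have h1t : (0:ℝ) < 1 + t := by linarith [ht.1]
    exact (((continuous_const.add continuous_id).continuousAt.log h1t.ne').div
      ((continuous_const.add continuous_id).continuousAt) h1t.ne').continuousWithinAt
  rw [intervalIntegral.integral_eq_sub_of_hasDerivAt hderiv hint]
  norm_num

-- integrability of the main integrand
lemma iglog : IntervalIntegrable (fun x : ℝ => Real.log (1-x) / (1+x)) volume 0 1 := by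
  have h1 : IntervalIntegrable (fun x : ℝ => Real.log (1-x)) volume 0 1 := by
    have := ilog.comp_sub_left 1
    simpa using this.symm
  refine h1.mono_fun ?_ ?_
  · exact (Real.measurable_log.comp (measurable_const.sub measurable_id)).div
      (measurable_const.add measurable_id) |>.aestronglyMeasurable
  · rw [Filter.EventuallyLE, ae_restrict_iff' measurableSet_uIoc]
    refine Filter.Eventually.of_forall fun x hx => ?_
    rw [uIoc_of_le (by norm_num)] at hx
    simp only [Real.norm_eq_abs, abs_div]
    rw [abs_of_pos (by linarith [hx.1] : (0:ℝ) < 1 + x)]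
    rw [div_le_iff₀ (by linarith [hx.1])]
    nlinarith [abs_nonneg (Real.log (1-x)), hx.1, hx.2]

-- integrability of log t / (1+t)
lemma ihlog : IntervalIntegrable (fun t : ℝ => Real.log t / (1+t)) volume 0 1 := by
  refine ilog.mono_fun ?_ ?_
  · exact (Real.measurable_log.div (measurable_const.add measurable_id)).aestronglyMeasurable
  · rw [Filter.EventuallyLE, ae_restrict_iff' measurableSet_uIoc]
    refine Filter.Eventually.of_forall fun x hx => ?_
    rw [uIoc_of_le (by norm_num)] at hx
    simp only [Real.norm_eq_abs, abs_div]
    rw [abs_of_pos (by linarith [hx.1] : (0:ℝ) < 1 + x)]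
    rw [div_le_iff₀ (by linarith [hx.1])]
    nlinarith [abs_nonneg (Real.log x), hx.1]

/-- `∫₀¹ log(1−x)/(1+x) dx = (log(2)² − π²/6)/2`. -/
theorem integral_log_one_sub_div_one_add :
    ∫ x in (0:ℝ)..1, Real.log (1 - x) / (1 + x) =
      (Real.log 2 ^ 2 - π ^ 2 / 6) / 2 := by
  set g : ℝ → ℝ := fun x => Real.log (1-x) / (1+x) with hg
  set f : ℝ → ℝ := fun t => (1-t)/(1+t) with hf
  set f' : ℝ → ℝ := fun t => -(2/(1+t)^2) with hf'
  have h01 : (0:ℝ) ≤ 1 := by norm_num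
  have huIcc : uIcc (0:ℝ) 1 = Icc 0 1 := uIcc_of_le h01
  have hpos : ∀ t : ℝ, t ∈ Icc (0:ℝ) 1 → (0:ℝ) < 1 + t := fun t ht => by linarith [ht.1]
  -- continuity of f on [[0,1]]
  have hfc : ContinuousOn f (uIcc (0:ℝ) 1) := by
    rw [huIcc]
    exact ((continuous_const.sub continuous_id).continuousOn).div
      ((continuous_const.add continuous_id).continuousOn) (fun t ht => (hpos t ht).ne')
  -- derivative
  have hderiv : ∀ t ∈ Ioo (0:ℝ) 1, HasDerivAt f (f' t) t := by
    intro t ht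
    have h1t : (0:ℝ) < 1 + t := by linarith [ht.1]
    have h1 : HasDerivAt (fun t : ℝ => 1 - t) (-1) t := by
      simpa using (hasDerivAt_id t).const_sub 1
    have h2 : HasDerivAt (fun t : ℝ => 1 + t) 1 t := by
      simpa using (hasDerivAt_id t).const_add 1
    have := h1.div h2 h1t.ne'
    refine this.congr_deriv ?_
    rw [hf']
    field_simp
    ring
  -- image facts
  have himg_Ioo : f '' Ioo 0 1 ⊆ Ioo (0:ℝ) 1 := by
    rintro x ⟨t, ht, rfl⟩
    have h1t : (0:ℝ) < 1 + t := by linarith [ht.1]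
    constructor
    · apply div_pos (by linarith [ht.2]) h1t
    · rw [div_lt_one h1t]; linarith [ht.1]
  have himg_Icc : f '' uIcc (0:ℝ) 1 ⊆ Icc (0:ℝ) 1 := by
    rw [huIcc]
    rintro x ⟨t, ht, rfl⟩
    have h1t : (0:ℝ) < 1 + t := hpos t ht
    constructor
    · apply div_nonneg (by linarith [ht.2]) h1t.le
    · rw [div_le_one h1t]; linarith [ht.1]
  -- g continuous on f '' Ioo 0 1
  have hgc : ContinuousOn g (f '' Ioo 0 1) := by
    refine ContinuousOn.mono ?_ himg_Ioo
    intro x hx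
    have : (0:ℝ) < 1 - x := by linarith [hx.2]
    have h1x : (0:ℝ) < 1 + x := by linarith [hx.1]
    exact (((continuous_const.sub continuous_id).continuousAt.log this.ne').div
      ((continuous_const.add continuous_id).continuousAt) h1x.ne').continuousWithinAt
  -- g integrable on image of Icc
  have hg1 : IntegrableOn g (f '' uIcc (0:ℝ) 1) := by
    refine IntegrableOn.mono_set ?_ himg_Icc
    rw [integrableOn_Icc_iff_integrableOn_Ioc]
    have := iglog
    rw [intervalIntegrable_iff, uIoc_of_le h01] at this
    exact this
  -- the substituted function
  have hsubst_eq : ∀ t ∈ Icc (0:ℝ) 1,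
      f' t • (g ∘ f) t = -(Real.log (2*t/(1+t)) / (1+t)) := by
    intro t ht
    have h1t : (0:ℝ) < 1 + t := hpos t ht
    rcases eq_or_lt_of_le ht.1 with rfl | ht0
    · simp [hg, hf, hf', Function.comp]
    · have hft : 1 - f t = 2*t/(1+t) := by rw [hf]; field_simp; ring
      have hft2 : 1 + f t = 2/(1+t) := by rw [hf]; field_simp; ring
      rw [smul_eq_mul, Function.comp_apply, hg]
      simp only []
      rw [hft, hft2, hf']
      simp only []
      rw [div_div_eq_mul_div]
      field_simp
  -- integrability of the substituted integrand
  set h : ℝ → ℝ := fun t => -(Real.log (2*t/(1+t)) / (1+t)) with hh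
  have hhint : IntervalIntegrable h volume 0 1 := by
    have hdom : IntervalIntegrable (fun t : ℝ => |Real.log t| + 2) volume 0 1 :=
      ilog.abs.add (intervalIntegrable_const)
    refine hdom.mono_fun ?_ ?_
    · refine Measurable.aestronglyMeasurable ?_
      refine Measurable.neg ?_
      exact (Real.measurable_log.comp ((measurable_const.mul measurable_id).div
        (measurable_const.add measurable_id))).div (measurable_const.add measurable_id)
    · rw [Filter.EventuallyLE, ae_restrict_iff' measurableSet_uIoc]
      refine Filter.Eventually.of_forall fun t ht => ?_
      rw [uIoc_of_le h01] at ht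
      have ht0 : (0:ℝ) < t := ht.1
      have h1t : (0:ℝ) < 1 + t := by linarith
      have hlogeq : Real.log (2*t/(1+t)) = Real.log 2 + Real.log t - Real.log (1+t) := by
        rw [Real.log_div (by positivity) h1t.ne', Real.log_mul (by norm_num) ht0.ne']
      have hb1 : Real.log 2 ≤ 1 := by
        have := Real.log_le_sub_one_of_pos (by norm_num : (0:ℝ) < 2); linarith
      have hb2 : (0:ℝ) ≤ Real.log (1+t) := Real.log_nonneg (by linarith)
      have hb3 : Real.log (1+t) ≤ 1 := by
        have := Real.log_le_sub_one_of_pos h1t; linarith [ht.2]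
      have hb0 : (0:ℝ) ≤ Real.log 2 := Real.log_nonneg (by norm_num)
      have habs : |Real.log (2*t/(1+t))| ≤ |Real.log t| + 2 := by
        rw [hlogeq]
        have h1 := abs_sub (Real.log 2 + Real.log t) (Real.log (1+t))
        have h2 := abs_add_le (Real.log 2) (Real.log t)
        have h3 : |Real.log 2| = Real.log 2 := abs_of_nonneg hb0
        have h4 : |Real.log (1+t)| = Real.log (1+t) := abs_of_nonneg hb2
        calc |Real.log 2 + Real.log t - Real.log (1+t)|
            ≤ |Real.log 2 + Real.log t| + |Real.log (1+t)| := abs_sub _ _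
          _ ≤ |Real.log 2| + |Real.log t| + |Real.log (1+t)| := by linarith [abs_add_le (Real.log 2) (Real.log t)]
          _ ≤ |Real.log t| + 2 := by rw [h3, h4]; linarith
      simp only [Real.norm_eq_abs, hh, abs_neg, abs_div]
      rw [abs_of_pos h1t]
      have : |Real.log (2*t/(1+t))| / (1+t) ≤ |Real.log (2*t/(1+t))| := by
        rw [div_le_iff₀ h1t]
        nlinarith [abs_nonneg (Real.log (2*t/(1+t)))]
      calc |Real.log (2*t/(1+t))| / (1+t) ≤ |Real.log (2*t/(1+t))| := this
        _ ≤ |Real.log t| + 2 := habs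
        _ ≤ |(|Real.log t| + 2)| := le_abs_self _
  have hg2 : IntegrableOn (fun t => f' t • (g ∘ f) t) (uIcc (0:ℝ) 1) := by
    rw [huIcc]
    have hhIcc : IntegrableOn h (Icc (0:ℝ) 1) := by
      rw [integrableOn_Icc_iff_integrableOn_Ioc]
      have := hhint
      rw [intervalIntegrable_iff, uIoc_of_le h01] at this
      exact this
    exact hhIcc.congr_fun (fun t ht => (hsubst_eq t ht).symm) measurableSet_Icc
  -- apply substitution
  have hff' : ∀ x ∈ Ioo (min (0:ℝ) 1) (max (0:ℝ) 1), HasDerivWithinAt f (f' x) (Ioi x) x := by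
    intro x hx
    rw [min_eq_left h01, max_eq_right h01] at hx
    exact (hderiv x hx).hasDerivWithinAt
  have hgc' : ContinuousOn g (f '' Ioo (min (0:ℝ) 1) (max (0:ℝ) 1)) := by
    rw [min_eq_left h01, max_eq_right h01]; exact hgc
  have key := intervalIntegral.integral_comp_smul_deriv''' hfc hff' hgc' hg1 hg2
  have hf0 : f 0 = 1 := by rw [hf]; norm_num
  have hf1 : f 1 = 0 := by rw [hf]; norm_num
  rw [hf0, hf1] at key
  have hLHS : (∫ x in (0:ℝ)..1, f' x • (g ∘ f) x) = ∫ t in (0:ℝ)..1, h t :=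
    intervalIntegral.integral_congr (fun t ht => hsubst_eq t (huIcc ▸ ht))
  have key2 : (∫ t in (0:ℝ)..1, h t) = -∫ x in (0:ℝ)..1, g x := by
    rw [← hLHS, key, intervalIntegral.integral_symm]
  have hI : (∫ x in (0:ℝ)..1, g x) = -∫ t in (0:ℝ)..1, h t := by linarith [key2]
  -- split -h = log2/(1+t) + log t/(1+t) - log(1+t)/(1+t) on Ioc
  have hsplit : (-∫ t in (0:ℝ)..1, h t) =
      ∫ t in (0:ℝ)..1, (Real.log 2 / (1+t) + Real.log t / (1+t) - Real.log (1+t) / (1+t)) := by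
    rw [← intervalIntegral.integral_neg]
    rw [intervalIntegral.integral_of_le h01, intervalIntegral.integral_of_le h01]
    refine setIntegral_congr_fun measurableSet_Ioc fun t ht => ?_
    have ht0 : (0:ℝ) < t := ht.1
    have h1t : (0:ℝ) < 1 + t := by linarith
    rw [hh]
    simp only [neg_neg]
    rw [Real.log_div (by positivity) h1t.ne', Real.log_mul (by norm_num) ht0.ne']
    ring
  have hi1 : IntervalIntegrable (fun t : ℝ => Real.log 2 / (1+t)) volume 0 1 := by
    apply ContinuousOn.intervalIntegrable
    intro t ht
    rw [huIcc] at ht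
    exact (continuousAt_const.div ((continuous_const.add continuous_id).continuousAt)
      (hpos t ht).ne').continuousWithinAt
  have hi3 : IntervalIntegrable (fun t : ℝ => Real.log (1+t) / (1+t)) volume 0 1 := by
    apply ContinuousOn.intervalIntegrable
    intro t ht
    rw [huIcc] at ht
    exact (((continuous_const.add continuous_id).continuousAt.log (hpos t ht).ne').div
      ((continuous_const.add continuous_id).continuousAt) (hpos t ht).ne').continuousWithinAt
  rw [hI, hsplit, intervalIntegral.integral_sub (hi1.add ihlog) hi3,
    intervalIntegral.integral_add hi1 ihlog, int_const_div, int_log_div_one_add,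
    int_log_one_add_div]
  ring
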